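/- Let (X,d) be a metric space equipped with its Borel σ-algebra, and let r_1,…,r_M ∈ X be prototypes with dissimilarity embedding ζ(g) = (d(g,r_1),…,d(g,r_M)) ∈ ℝ^M. Let g_1,…,g_n (with n ≥ 2) be i.i.d. X-valued random elements on a probability space (Ω,P) with common law Q such that E[d(g_1,z)²] < ∞ for every z ∈ X. Let m ∈ X be a Fréchet population mean of Q with Fréchet variation V_Q := E[d(g_1,m)²], let μ̂ : Ω → X be a measurable Fréchet sample mean of g_1,…,g_n, and set ȳ := (1/n)·Σ_{t=1}^n ζ(g_t), Var_F := E[‖ζ(g_1) − E[ζ(g_1)]‖₂²], and v₂ := M·V_Q − Var_F/2. Then for every δ > 0: P(‖ȳ − ζ(μ̂)‖₂² ≥ δ) ≤ v₂/δ. -/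

import Mathlib

open MeasureTheory ProbabilityTheory Finset
open scoped RealInnerProductSpace

/-- The dissimilarity embedding `ζ(g) = (d(g,r_1),…,d(g,r_M)) ∈ ℝ^M`. -/
noncomputable def dissEmbed {X : Type*} [MetricSpace X] {M : ℕ} (r : Fin M → X) (g : X) :
    EuclideanSpace ℝ (Fin M) :=
  (WithLp.equiv 2 (Fin M → ℝ)).symm fun i => dist g (r i)

lemma eucl_norm_sq {M : ℕ} (v : EuclideanSpace ℝ (Fin M)) : ‖v‖^2 = ∑ i, v i ^2 := by
  rw [EuclideanSpace.norm_eq, Real.sq_sqrt (by positivity)]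
  simp [sq_abs]

lemma sum_norm_sub_sq_mean {E : Type*} [NormedAddCommGroup E] [InnerProductSpace ℝ E]
    {n : ℕ} (a : Fin n → E) (b c : E) (hc : (n : ℝ) • c = ∑ t, a t) :
    ∑ t, ‖a t - b‖^2 = (∑ t, ‖a t - c‖^2) + n * ‖c - b‖^2 := by
  have key : ∀ t, ‖a t - b‖^2 = ‖a t - c‖^2 + 2 * ⟪a t - c, c - b⟫ + ‖c - b‖^2 := by
    intro t
    have : a t - b = (a t - c) + (c - b) := by abel
    rw [this, norm_add_sq_real]
  simp_rw [key]
  rw [Finset.sum_add_distrib, Finset.sum_add_distrib]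
  have : ∑ t : Fin n, 2 * ⟪a t - c, c - b⟫ = 2 * ⟪(∑ t, a t) - (n:ℝ) • c, c - b⟫ := by
    rw [← Finset.mul_sum, ← sum_inner]
    congr 2
    rw [Finset.sum_sub_distrib]
    congr 1
    simp [Finset.sum_const, ← Nat.cast_smul_eq_nsmul ℝ]
  rw [this, ← hc]
  simp [Finset.sum_const, card_univ, mul_comm]

lemma dissEmbed_apply {X : Type*} [MetricSpace X] {M : ℕ} (r : Fin M → X) (x : X) (i : Fin M) :
    dissEmbed r x i = dist x (r i) := rfl

lemma dissEmbed_sub_sq_le {X : Type*} [MetricSpace X] {M : ℕ} (r : Fin M → X) (x z : X) :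
    ‖dissEmbed r x - dissEmbed r z‖^2 ≤ M * dist x z ^ 2 := by
  rw [eucl_norm_sq]
  have h : ∀ i : Fin M, (dissEmbed r x - dissEmbed r z) i ^ 2 ≤ dist x z ^ 2 := by
    intro i
    have h1 : (dissEmbed r x - dissEmbed r z) i = dist x (r i) - dist z (r i) := rfl
    rw [h1]
    have h2 := abs_le.mp (abs_dist_sub_le x z (r i))
    exact sq_le_sq' (by linarith [h2.1, h2.2]) h2.2
  calc ∑ i, (dissEmbed r x - dissEmbed r z) i ^2 ≤ ∑ _i : Fin M, dist x z ^2 :=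
        Finset.sum_le_sum fun i _ => h i
    _ = M * dist x z ^2 := by simp [mul_comm]

lemma dissEmbed_sub_norm_le {X : Type*} [MetricSpace X] {M : ℕ} (r : Fin M → X) (x z : X) :
    ‖dissEmbed r x - dissEmbed r z‖ ≤ Real.sqrt M * dist x z := by
  have h := Real.sqrt_le_sqrt (dissEmbed_sub_sq_le r x z)
  rwa [Real.sqrt_sq (norm_nonneg _), Real.sqrt_mul (by positivity),
    Real.sqrt_sq dist_nonneg] at h

lemma dissEmbed_continuous {X : Type*} [MetricSpace X] {M : ℕ} (r : Fin M → X) :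
    Continuous (dissEmbed r) := by
  have h : Continuous fun (g : X) (i : Fin M) => dist g (r i) := by fun_prop
  exact (PiLp.continuous_toLp 2 (fun _ : Fin M => ℝ)).comp h

lemma memLp2_integrable_mul {α : Type*} [MeasurableSpace α] {μ : Measure α} {f g : α → ℝ}
    (hf : MemLp f 2 μ) (hg : MemLp g 2 μ) : Integrable (fun x => f x * g x) μ := by
  refine Integrable.mono' ((hf.integrable_sq.add hg.integrable_sq).div_const 2)
    (hf.aestronglyMeasurable.mul hg.aestronglyMeasurable) (ae_of_all _ fun x => ?_)
  rw [Real.norm_eq_abs, abs_mul]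
  simp only [Pi.add_apply]
  nlinarith [sq_nonneg (|f x| - |g x|), sq_abs (f x), sq_abs (g x), abs_nonneg (f x),
    abs_nonneg (g x)]

/-- Markov-inequality part of the paper's Lemma 1:
`P(‖ȳ − ζ(μ̂)‖₂² ≥ δ) ≤ v₂/δ` for every `δ > 0`. -/
theorem embedded_sample_mean_markov_bound
    {X : Type*} [MetricSpace X] [MeasurableSpace X] [BorelSpace X]
    {Ω : Type*} [MeasurableSpace Ω] (P : Measure Ω) [IsProbabilityMeasure P]
    {M : ℕ} (r : Fin M → X)
    {n : ℕ} (hn : 2 ≤ n) (g : Fin n → Ω → X) (hgm : ∀ t, Measurable (g t))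
    (Q : Measure X) [IsProbabilityMeasure Q]
    (hlaw : ∀ t, Measure.map (g t) P = Q)
    (hindep : iIndepFun g P)
    (hint : ∀ z : X, Integrable (fun x => dist x z ^ 2) Q)
    -- Fréchet population mean m with variation V_Q
    (m : X) (hmean : ∀ z : X, ∫ x, dist x m ^ 2 ∂Q ≤ ∫ x, dist x z ^ 2 ∂Q)
    (VQ : ℝ) (hVQ : VQ = ∫ x, dist x m ^ 2 ∂Q)
    -- measurable Fréchet sample mean
    (μhat : Ω → X) (hμhat : Measurable μhat)
    (hsample : ∀ ω, ∀ z : X,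
      ∑ t, dist (g t ω) (μhat ω) ^ 2 ≤ ∑ t, dist (g t ω) z ^ 2)
    -- embedded sample mean, expectation, variance and v₂
    (ybar : Ω → EuclideanSpace ℝ (Fin M))
    (hybar : ∀ ω, ybar ω = (n : ℝ)⁻¹ • ∑ t, dissEmbed r (g t ω))
    (e : EuclideanSpace ℝ (Fin M)) (he : e = ∫ x, dissEmbed r x ∂Q)
    (VarF : ℝ) (hVarF : VarF = ∫ x, ‖dissEmbed r x - e‖ ^ 2 ∂Q)
    (v2 : ℝ) (hv2 : v2 = (M : ℝ) * VQ - VarF / 2) :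
    ∀ δ > (0 : ℝ),
      (P {ω | δ ≤ ‖ybar ω - dissEmbed r (μhat ω)‖ ^ 2}).toReal ≤ v2 / δ := by
  intro δ hδ
  have hnpos : 0 < (n : ℝ) := by
    have : 0 < n := lt_of_lt_of_le (by norm_num) hn
    exact_mod_cast this
  have hn0 : (n : ℝ) ≠ 0 := ne_of_gt hnpos
  have h2n : (2 : ℝ) ≤ (n : ℝ) := by exact_mod_cast hn
  have hζc : Continuous (dissEmbed r) := dissEmbed_continuous r
  have hζmeas : Measurable (dissEmbed r) := hζc.measurable
  -- change of variables
  have hCV : ∀ (t : Fin n) (φ : X → ℝ), AEStronglyMeasurable φ Q →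
      ∫ ω, φ (g t ω) ∂P = ∫ x, φ x ∂Q := by
    intro t φ hφ
    rw [← hlaw t] at hφ ⊢
    exact (integral_map (hgm t).aemeasurable hφ).symm
  have hCVI : ∀ (t : Fin n) (φ : X → ℝ), AEStronglyMeasurable φ Q → Integrable φ Q →
      Integrable (fun ω => φ (g t ω)) P := by
    intro t φ hφ hφI
    rw [← hlaw t] at hφ hφI
    exact (integrable_map_measure hφ (hgm t).aemeasurable).mp hφI
  -- integrability facts over Q
  have hdaesm : ∀ z : X, AEStronglyMeasurable (fun x => dist x z) Q := fun z =>
    (continuous_id.dist continuous_const).aestronglyMeasurable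
  have hdaesm2 : ∀ z : X, AEStronglyMeasurable (fun x => dist x z ^ 2) Q := fun z =>
    ((continuous_id.dist continuous_const).pow 2).aestronglyMeasurable
  have hdmem2 : ∀ z : X, MemLp (fun x => dist x z) 2 Q := fun z =>
    (memLp_two_iff_integrable_sq (hdaesm z)).mpr (hint z)
  have hdQ1 : ∀ z : X, Integrable (fun x => dist x z) Q := fun z =>
    (hdmem2 z).integrable one_le_two
  have hζQint : Integrable (dissEmbed r) Q := by
    refine Integrable.mono' (((hdQ1 m).const_mul (Real.sqrt M)).add
      (integrable_const ‖dissEmbed r m‖)) hζc.aestronglyMeasurable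
      (ae_of_all _ fun x => ?_)
    calc ‖dissEmbed r x‖ = ‖(dissEmbed r x - dissEmbed r m) + dissEmbed r m‖ := by
          rw [sub_add_cancel]
      _ ≤ ‖dissEmbed r x - dissEmbed r m‖ + ‖dissEmbed r m‖ := norm_add_le _ _
      _ ≤ Real.sqrt M * dist x m + ‖dissEmbed r m‖ := by
          linarith [dissEmbed_sub_norm_le r x m]
  have he_i : ∀ i, e i = ∫ x, dist x (r i) ∂Q := by
    intro i
    rw [he]
    have h := (EuclideanSpace.proj i (𝕜 := ℝ)).integral_comp_comm hζQint
    simpa [dissEmbed_apply] using h.symm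
  -- `‖ζ x − e‖²` integrable over Q
  have hcnorm : ∀ x : X, ‖dissEmbed r x - e‖ ≤ ‖dissEmbed r x - dissEmbed r m‖
      + ‖dissEmbed r m - e‖ := fun x => norm_sub_le_norm_sub_add_norm_sub _ _ _
  have hnormsqQaesm : AEStronglyMeasurable (fun x => ‖dissEmbed r x - e‖^2) Q :=
    (((hζc.sub continuous_const).norm).pow 2).aestronglyMeasurable
  have hnormsqQ : Integrable (fun x => ‖dissEmbed r x - e‖^2) Q := by
    refine Integrable.mono' (((hint m).const_mul (2 * M)).add
      (integrable_const (2 * ‖dissEmbed r m - e‖^2))) hnormsqQaesm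
      (ae_of_all _ fun x => ?_)
    rw [Real.norm_eq_abs, abs_of_nonneg (sq_nonneg _)]
    simp only [Pi.add_apply]
    have h1 : ‖dissEmbed r x - e‖^2 ≤ (‖dissEmbed r x - dissEmbed r m‖ + ‖dissEmbed r m - e‖)^2 :=
      pow_le_pow_left₀ (norm_nonneg _) (hcnorm x) 2
    nlinarith [h1, dissEmbed_sub_sq_le r x m,
      sq_nonneg (‖dissEmbed r x - dissEmbed r m‖ - ‖dissEmbed r m - e‖)]
  -- per-t integrals
  have hSint : ∀ t, Integrable (fun ω => ‖dissEmbed r (g t ω) - e‖^2) P := fun t =>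
    hCVI t _ hnormsqQaesm hnormsqQ
  have hSval : ∀ t, ∫ ω, ‖dissEmbed r (g t ω) - e‖^2 ∂P = VarF := fun t => by
    rw [hCV t _ hnormsqQaesm, ← hVarF]
  have hDint : ∀ t, Integrable (fun ω => dist (g t ω) m ^ 2) P := fun t =>
    hCVI t _ (hdaesm2 m) (hint m)
  have hDval : ∀ t, ∫ ω, dist (g t ω) m ^ 2 ∂P = VQ := fun t => by
    rw [hCV t _ (hdaesm2 m), ← hVQ]
  -- centered coordinate variables
  have hXmem2 : ∀ (t : Fin n) (i : Fin M),
      MemLp (fun ω => dist (g t ω) (r i) - e i) 2 P := by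
    intro t i
    have h1 : MemLp (fun ω => dist (g t ω) (r i)) 2 P := by
      refine (memLp_two_iff_integrable_sq ?_).mpr (hCVI t _ (hdaesm2 (r i)) (hint (r i)))
      exact ((continuous_id.dist continuous_const).measurable.comp (hgm t)).aestronglyMeasurable
    exact h1.sub (memLp_const _)
  have hXint : ∀ t i, Integrable (fun ω => dist (g t ω) (r i) - e i) P := fun t i =>
    (hXmem2 t i).integrable one_le_two
  have hX0 : ∀ t i, ∫ ω, (dist (g t ω) (r i) - e i) ∂P = 0 := by
    intro t i
    rw [integral_sub (hCVI t _ (hdaesm (r i)) (hdQ1 (r i))) (integrable_const _),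
      hCV t _ (hdaesm (r i)), integral_const]
    simp [← he_i i]
  have hprodint : ∀ (t s : Fin n) (i : Fin M),
      Integrable (fun ω => (dist (g t ω) (r i) - e i) * (dist (g s ω) (r i) - e i)) P :=
    fun t s i => memLp2_integrable_mul (hXmem2 t i) (hXmem2 s i)
  have hprod0 : ∀ (t s : Fin n) (i : Fin M), t ≠ s →
      ∫ ω, (dist (g t ω) (r i) - e i) * (dist (g s ω) (r i) - e i) ∂P = 0 := by
    intro t s i hts
    have hφ : Measurable fun x : X => dist x (r i) - e i :=
      ((continuous_id.dist continuous_const).measurable).sub measurable_const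
    have hi : IndepFun (fun ω => dist (g t ω) (r i) - e i)
        (fun ω => dist (g s ω) (r i) - e i) P := by
      have := (hindep.indepFun hts).comp hφ hφ
      exact this
    have h := hi.integral_fun_mul_eq_mul_integral (hXint t i).aestronglyMeasurable
      (hXint s i).aestronglyMeasurable
    rw [hX0, hX0, mul_zero] at h
    exact h
  -- coordinates of the sum
  have hcoordsum : ∀ x : X, ‖dissEmbed r x - e‖^2 = ∑ i, (dist x (r i) - e i)^2 := by
    intro x
    rw [eucl_norm_sq]
    exact Finset.sum_congr rfl fun i _ => by simp [dissEmbed]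
  -- expansion of ‖ybar − e‖²
  have hBrep : ∀ ω, ‖ybar ω - e‖^2 =
      ((n:ℝ)⁻¹)^2 * ∑ t, ∑ s, ∑ i,
        (dist (g t ω) (r i) - e i) * (dist (g s ω) (r i) - e i) := by
    intro ω
    have h1 : ybar ω - e = (n:ℝ)⁻¹ • (∑ t, (dissEmbed r (g t ω) - e)) := by
      rw [hybar ω, Finset.sum_sub_distrib, smul_sub]
      congr 1
      rw [Finset.sum_const, card_univ, Fintype.card_fin, ← Nat.cast_smul_eq_nsmul ℝ,
        smul_smul, inv_mul_cancel₀ hn0, one_smul]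
    rw [h1, norm_smul, mul_pow, Real.norm_eq_abs, sq_abs]
    congr 1
    rw [eucl_norm_sq]
    have h2 : ∀ i : Fin M, (∑ t, (dissEmbed r (g t ω) - e)) i
        = ∑ t, (dist (g t ω) (r i) - e i) := by
      intro i
      rw [WithLp.ofLp_sum, Finset.sum_apply]
      exact Finset.sum_congr rfl fun t _ => by simp [dissEmbed]
    calc ∑ i, ((∑ t, (dissEmbed r (g t ω) - e)) i)^2
        = ∑ i, (∑ t, (dist (g t ω) (r i) - e i))^2 := by simp_rw [h2]
      _ = ∑ i, ∑ t, ∑ s, (dist (g t ω) (r i) - e i) * (dist (g s ω) (r i) - e i) := by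
          congr 1; ext i; rw [sq, Finset.sum_mul_sum]
      _ = ∑ t, ∑ s, ∑ i, (dist (g t ω) (r i) - e i) * (dist (g s ω) (r i) - e i) := by
          rw [Finset.sum_comm]
          congr 1; ext t
          rw [Finset.sum_comm]
  have hBfun : (fun ω => ‖ybar ω - e‖^2) = fun ω => ((n:ℝ)⁻¹)^2 * ∑ t, ∑ s, ∑ i,
      (dist (g t ω) (r i) - e i) * (dist (g s ω) (r i) - e i) := funext hBrep
  have hBint : Integrable (fun ω => ‖ybar ω - e‖^2) P := by
    rw [hBfun]
    exact (integrable_finset_sum _ fun t _ => integrable_finset_sum _ fun s _ =>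
      integrable_finset_sum _ fun i _ => hprodint t s i).const_mul _
  have hBval : ∫ ω, ‖ybar ω - e‖^2 ∂P = VarF / n := by
    rw [hBfun, integral_const_mul, integral_finset_sum _ fun t _ =>
      integrable_finset_sum _ fun s _ => integrable_finset_sum _ fun i _ => hprodint t s i]
    have hinner : ∀ t : Fin n, ∫ ω, ∑ s, ∑ i,
        (dist (g t ω) (r i) - e i) * (dist (g s ω) (r i) - e i) ∂P = VarF := by
      intro t
      rw [integral_finset_sum _ fun s _ => integrable_finset_sum _ fun i _ => hprodint t s i]
      rw [Finset.sum_eq_single_of_mem t (Finset.mem_univ t)]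
      · rw [integral_finset_sum _ fun i _ => hprodint t t i]
        have : ∀ i : Fin M, ∫ ω, (dist (g t ω) (r i) - e i) * (dist (g t ω) (r i) - e i) ∂P
            = ∫ ω, (dist (g t ω) (r i) - e i)^2 ∂P := by
          intro i; congr 1; ext ω; ring
        rw [Finset.sum_congr rfl fun i _ => this i,
          ← integral_finset_sum _ fun i _ => by
            have h := hprodint t t i
            have : (fun ω => (dist (g t ω) (r i) - e i) * (dist (g t ω) (r i) - e i))
                = fun ω => (dist (g t ω) (r i) - e i)^2 := by ext ω; ring
            rwa [this] at h]
        have : ∫ ω, ∑ i, (dist (g t ω) (r i) - e i)^2 ∂P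
            = ∫ ω, ‖dissEmbed r (g t ω) - e‖^2 ∂P := by
          congr 1; ext ω; rw [hcoordsum]
        rw [this, hSval]
      · intro s _ hst
        rw [integral_finset_sum _ fun i _ => hprodint t s i]
        exact Finset.sum_eq_zero fun i _ => hprod0 t s i (Ne.symm hst)
    rw [Finset.sum_congr rfl fun t _ => hinner t]
    simp only [Finset.sum_const, card_univ, Fintype.card_fin, nsmul_eq_mul]
    field_simp
  -- the dominating function
  set Gf : Ω → ℝ := fun ω => ((M:ℝ) * (∑ t, dist (g t ω) m ^ 2)
      - ∑ t, ‖dissEmbed r (g t ω) - e‖^2) / n + ‖ybar ω - e‖^2 with hGf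
  have hFG : ∀ ω, ‖ybar ω - dissEmbed r (μhat ω)‖^2 ≤ Gf ω := by
    intro ω
    have hc : (n:ℝ) • ybar ω = ∑ t, dissEmbed r (g t ω) := by
      rw [hybar ω, smul_smul, mul_inv_cancel₀ hn0, one_smul]
    have h1 := sum_norm_sub_sq_mean (fun t => dissEmbed r (g t ω))
      (dissEmbed r (μhat ω)) (ybar ω) hc
    have h2 := sum_norm_sub_sq_mean (fun t => dissEmbed r (g t ω)) e (ybar ω) hc
    have hub : ∑ t, ‖dissEmbed r (g t ω) - dissEmbed r (μhat ω)‖^2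
        ≤ (M:ℝ) * ∑ t, dist (g t ω) m ^ 2 := by
      calc ∑ t, ‖dissEmbed r (g t ω) - dissEmbed r (μhat ω)‖^2
          ≤ ∑ t, (M:ℝ) * dist (g t ω) (μhat ω) ^ 2 :=
            Finset.sum_le_sum fun t _ => dissEmbed_sub_sq_le r _ _
        _ = (M:ℝ) * ∑ t, dist (g t ω) (μhat ω) ^ 2 := by rw [Finset.mul_sum]
        _ ≤ (M:ℝ) * ∑ t, dist (g t ω) m ^ 2 :=
            mul_le_mul_of_nonneg_left (hsample ω m) (Nat.cast_nonneg M)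
    show _ ≤ ((M:ℝ) * (∑ t, dist (g t ω) m ^ 2)
      - ∑ t, ‖dissEmbed r (g t ω) - e‖^2) / (n:ℝ) + ‖ybar ω - e‖^2
    rw [div_add' _ _ _ hn0, le_div_iff₀ hnpos]
    nlinarith [h1, h2, hub]
  have hGint : Integrable Gf P := by
    refine Integrable.add (Integrable.div_const ?_ _) hBint
    exact ((integrable_finset_sum _ fun t _ => hDint t).const_mul _).sub
      (integrable_finset_sum _ fun t _ => hSint t)
  have hVarFnn : 0 ≤ VarF := by
    rw [hVarF]; exact integral_nonneg fun x => sq_nonneg _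
  have hGval : ∫ ω, Gf ω ∂P = (M:ℝ) * VQ - VarF + VarF / n := by
    show ∫ ω, (((M:ℝ) * (∑ t, dist (g t ω) m ^ 2)
      - ∑ t, ‖dissEmbed r (g t ω) - e‖^2) / (n:ℝ) + ‖ybar ω - e‖^2) ∂P
      = (M:ℝ) * VQ - VarF + VarF / n
    have hA1 : Integrable (fun ω => (M:ℝ) * ∑ t, dist (g t ω) m ^ 2) P :=
      (integrable_finset_sum _ fun t _ => hDint t).const_mul _
    have hA2 : Integrable (fun ω => ∑ t, ‖dissEmbed r (g t ω) - e‖^2) P :=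
      integrable_finset_sum _ fun t _ => hSint t
    have hA : Integrable (fun ω => (M:ℝ) * (∑ t, dist (g t ω) m ^ 2)
        - ∑ t, ‖dissEmbed r (g t ω) - e‖^2) P := hA1.sub hA2
    rw [integral_add (hA.div_const _) hBint, hBval, integral_div, integral_sub hA1 hA2,
      integral_const_mul, integral_finset_sum _ fun t _ => hDint t,
      integral_finset_sum _ fun t _ => hSint t]
    rw [Finset.sum_congr rfl fun t _ => hDval t, Finset.sum_congr rfl fun t _ => hSval t]
    simp only [Finset.sum_const, card_univ, Fintype.card_fin, nsmul_eq_mul]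
    field_simp
  have hGle : ∫ ω, Gf ω ∂P ≤ v2 := by
    rw [hGval, hv2]
    have h1 : VarF / n ≤ VarF / 2 :=
      div_le_div_of_nonneg_left hVarFnn (by norm_num) h2n
    linarith
  -- integrability and integral bound for F
  have hybarm : Measurable ybar := by
    have : ybar = fun ω => (n:ℝ)⁻¹ • ∑ t, dissEmbed r (g t ω) := funext hybar
    rw [this]
    exact Measurable.const_smul (g := fun ω => ∑ t, dissEmbed r (g t ω))
      (Finset.measurable_sum _ fun t _ => hζmeas.comp (hgm t)) ((n:ℝ)⁻¹)
  have hFaesm : AEStronglyMeasurable (fun ω => ‖ybar ω - dissEmbed r (μhat ω)‖^2) P :=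
    (((hybarm.sub (hζmeas.comp hμhat)).norm).pow_const 2).aestronglyMeasurable
  have hFint : Integrable (fun ω => ‖ybar ω - dissEmbed r (μhat ω)‖^2) P := by
    refine hGint.mono' hFaesm (ae_of_all _ fun ω => ?_)
    rw [Real.norm_eq_abs, abs_of_nonneg (sq_nonneg _)]
    exact hFG ω
  have hFval : ∫ ω, ‖ybar ω - dissEmbed r (μhat ω)‖^2 ∂P ≤ v2 :=
    (integral_mono hFint hGint hFG).trans hGle
  -- Markov
  have hm := mul_meas_ge_le_integral_of_nonneg (μ := P)
    (f := fun ω => ‖ybar ω - dissEmbed r (μhat ω)‖^2)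
    (ae_of_all _ fun ω => sq_nonneg _) hFint δ
  rw [le_div_iff₀ hδ]
  calc (P {ω | δ ≤ ‖ybar ω - dissEmbed r (μhat ω)‖ ^ 2}).toReal * δ
      = δ * (P {ω | δ ≤ ‖ybar ω - dissEmbed r (μhat ω)‖ ^ 2}).toReal := mul_comm _ _
    _ ≤ ∫ ω, ‖ybar ω - dissEmbed r (μhat ω)‖^2 ∂P := hm
    _ ≤ v2 := hFval
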